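/- Let p be an odd prime, v ∈ ℚ_p a p-adic unit that is not a square in ℚ_p, A = diag(1, -v, p), and SO(3)_p = {L ∈ M₃(ℚ_p) : LᵀAL = A, det L = 1}. Let e₁, e₂, e₃ be the standard basis vectors of ℚ_p³. Then for every M ∈ SO(3)_p, the set of triples (X, Y, Z) with X, Y, Z ∈ SO(3)_p, X e₁ = e₁, Y e₂ = e₂, Z e₃ = e₃ and M = X·Y·Z has exactly two elements. -/

import Mathlib

set_option linter.unusedTactic false
set_option linter.unreachableTactic false
set_option maxHeartbeats 1000000
open Polynomial
variable {p : ℕ} [Fact p.Prime]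

lemma two_norm_one (hp : p ≠ 2) : ‖(2 : ℤ_[p])‖ = 1 := by
  have h2' : ¬ ((p : ℤ) ∣ 2) := by
    have : ¬ (p ∣ 2) := fun hd =>
      hp ((Nat.prime_dvd_prime_iff_eq Fact.out Nat.prime_two).mp hd)
    exact_mod_cast fun hd => this (by exact_mod_cast hd)
  have := (PadicInt.norm_int_lt_one_iff_dvd (p := p) 2).not.mpr h2'
  have hle : ‖(2 : ℤ_[p])‖ ≤ 1 := PadicInt.norm_le_one _
  push_neg at this
  have : ‖((2:ℤ) : ℤ_[p])‖ = 1 := le_antisymm (by exact_mod_cast hle) (by exact_mod_cast this)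
  exact_mod_cast this

lemma sqrt_close_one (hp : p ≠ 2) (u : ℚ_[p]) (h : ‖u - 1‖ < 1) :
    ∃ r : ℚ_[p], r * r = u := by
  have hu1 : ‖u‖ = 1 := by
    have he : u = 1 + (u - 1) := by ring
    rw [he, Padic.add_eq_max_of_ne (by simpa using h.ne')]
    simp [le_of_lt h]
  set U : ℤ_[p] := ⟨u, le_of_eq hu1⟩ with hU
  set F : Polynomial ℤ_[p] := X ^ 2 - C U with hF
  have heval : F.eval 1 = 1 - U := by simp [hF]
  have hderiv : F.derivative.eval 1 = 2 := by simp [hF]; norm_num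
  have hnorm : ‖F.eval 1‖ < ‖F.derivative.eval 1‖ ^ 2 := by
    rw [heval, hderiv, two_norm_one hp]
    have : ‖(1 : ℤ_[p]) - U‖ = ‖u - 1‖ := by
      rw [← norm_neg]
      have : -(1 - U) = U - 1 := by ring
      rw [this]
      exact_mod_cast congrArg norm (rfl : ((U - 1 : ℤ_[p]) : ℚ_[p]) = u - 1)
    simpa [this] using h
  obtain ⟨z, hz, -⟩ := hensels_lemma hnorm
  refine ⟨(z : ℚ_[p]), ?_⟩
  have : z ^ 2 = U := by
    have := hz
    simp [hF, sub_eq_zero] at this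
    exact this
  have : ((z : ℚ_[p])) ^ 2 = u := by exact_mod_cast congrArg (fun w : ℤ_[p] => (w : ℚ_[p])) this
  rw [← this]; ring

open Matrix
variable {v : ℚ_[p]}


lemma unit_form (hp : p ≠ 2) {v : ℚ_[p]} (hv : ‖v‖ = 1) (hvsq : ¬ IsSquare v)
    {t : ℚ_[p]} (ht : ‖t‖ ≤ 1) : ‖t ^ 2 - v‖ = 1 := by
  rcases lt_or_ge ‖t ^ 2 - v‖ 1 with hlt | hge
  · exfalso
    have htn : ‖t‖ = 1 := by
      by_contra hne
      have h1 : ‖t‖ < 1 := lt_of_le_of_ne ht hne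
      have : ‖t ^ 2 - v‖ = 1 := by
        rw [sub_eq_add_neg, Padic.add_eq_max_of_ne]
        · simp [hv, norm_pow]
          nlinarith [norm_nonneg t]
        · simp only [norm_neg, norm_pow, hv]
          nlinarith [norm_nonneg t]
      linarith [hlt.trans_eq this.symm]
    have ht2 : t ^ 2 ≠ 0 := by
      have : t ≠ 0 := fun h0 => by simp [h0] at htn
      exact pow_ne_zero _ this
    have : ‖v / t ^ 2 - 1‖ < 1 := by
      have : v / t ^ 2 - 1 = -(t ^ 2 - v) / t ^ 2 := by rw [neg_sub, sub_div, div_self ht2]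
      rw [this, norm_div, norm_neg, norm_pow, htn]
      simpa using hlt
    obtain ⟨r, hr⟩ := sqrt_close_one hp _ this
    exact hvsq ⟨r * t, by rw [show r * t * (r * t) = r * r * t ^ 2 by ring, hr, div_mul_cancel₀ _ ht2]⟩
  · refine le_antisymm ?_ hge
    calc ‖t ^ 2 - v‖ = ‖t ^ 2 + -v‖ := by rw [sub_eq_add_neg]
    _ ≤ max ‖t ^ 2‖ ‖-v‖ := Padic.nonarchimedean _ _
    _ = max ‖t ^ 2‖ ‖v‖ := by rw [norm_neg]
    _ ≤ 1 := by
        rw [hv]; simp [norm_pow]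
        nlinarith [norm_nonneg t]

lemma aniso (hp : p ≠ 2) {v : ℚ_[p]} (hv : ‖v‖ = 1) (hvsq : ¬ IsSquare v)
    (x y : ℚ_[p]) : ‖x ^ 2 - v * y ^ 2‖ = (max ‖x‖ ‖y‖) ^ 2 := by
  rcases le_or_gt ‖x‖ ‖y‖ with hxy | hxy
  · rcases eq_or_ne y 0 with rfl | hy0
    · have hx0 : x = 0 := by simpa using le_antisymm (by simpa using hxy) (norm_nonneg x)
      simp [hx0]
    · have ht : ‖x / y‖ ≤ 1 := by
        rw [norm_div, div_le_one (norm_pos_iff.mpr hy0)]; exact hxy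
      have key : x ^ 2 - v * y ^ 2 = ((x / y) ^ 2 - v) * y ^ 2 := by field_simp
      rw [key, norm_mul, norm_pow, unit_form hp hv hvsq ht, max_eq_right hxy]
      ring
  · have hne : ‖x ^ 2‖ ≠ ‖-(v * y ^ 2)‖ := by
      rw [norm_neg, norm_mul, norm_pow, norm_pow, hv, one_mul]
      nlinarith [norm_nonneg x, norm_nonneg y]
    have : ‖x ^ 2 - v * y ^ 2‖ = max ‖x ^ 2‖ ‖-(v * y ^ 2)‖ := by
      rw [sub_eq_add_neg, Padic.add_eq_max_of_ne hne]
    rw [this, norm_neg, norm_mul, norm_pow, norm_pow, hv, one_mul,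
      max_eq_left (le_of_lt hxy)]
    have : max (‖x‖ ^ 2) (‖y‖ ^ 2) = ‖x‖ ^ 2 := by
      apply max_eq_left; nlinarith [norm_nonneg x, norm_nonneg y]
    rw [this]

lemma m_bound (hp : p ≠ 2) {v : ℚ_[p]} (hv : ‖v‖ = 1) (hvsq : ¬ IsSquare v)
    (m y z : ℚ_[p]) (hid : m ^ 2 - v * y ^ 2 + p * z ^ 2 = p) :
    ‖m‖ ≤ ((p : ℝ)) ^ (-1 : ℤ) := by
  have hp1 : (1 : ℝ) < p := by exact_mod_cast (Fact.out : p.Prime).one_lt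
  rw [Padic.norm_le_pow_iff_norm_lt_pow_add_one]
  simp only [neg_add_cancel, zpow_zero]
  by_contra hge
  push_neg at hge
  have key : m ^ 2 - v * y ^ 2 = p * (1 - z ^ 2) := by linear_combination hid
  have hani : ‖m ^ 2 - v * y ^ 2‖ = (max ‖m‖ ‖y‖) ^ 2 :=
    aniso hp hv hvsq m y
  set N := max ‖m‖ ‖y‖ with hN
  have hN1 : 1 ≤ N := le_trans hge (le_max_left _ _)
  have hrhs : ‖(p : ℚ_[p]) * (1 - z ^ 2)‖ = (p : ℝ)⁻¹ * ‖1 - z ^ 2‖ := by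
    rw [norm_mul, Padic.norm_p]
  rcases le_or_gt ‖z‖ 1 with hz | hz
  · have h1z : ‖1 - z ^ 2‖ ≤ 1 := by
      calc ‖1 - z ^ 2‖ = ‖(1 : ℚ_[p]) + -(z ^ 2)‖ := by rw [sub_eq_add_neg]
      _ ≤ max ‖(1 : ℚ_[p])‖ ‖-(z ^ 2)‖ := Padic.nonarchimedean _ _
      _ ≤ 1 := by
        rw [norm_neg, norm_pow, norm_one]
        apply max_le le_rfl
        nlinarith [norm_nonneg z]
    have : N ^ 2 ≤ (p : ℝ)⁻¹ * 1 := by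
      rw [← hani, key, hrhs]
      gcongr
    have h2 : (1:ℝ) ≤ (p:ℝ)⁻¹ := by nlinarith
    have h3 : (p:ℝ) ≤ 1 := by
      have h4 := mul_le_mul_of_nonneg_left h2 (le_of_lt (by positivity : (0:ℝ) < (p:ℝ)))
      rwa [mul_one, mul_inv_cancel₀ (by positivity : ((p:ℝ)) ≠ 0)] at h4
    linarith
  · have h1z : ‖1 - z ^ 2‖ = ‖z‖ ^ 2 := by
      rw [sub_eq_add_neg, Padic.add_eq_max_of_ne]
      · rw [norm_neg, norm_pow, norm_one]
        apply max_eq_right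
        nlinarith
      · rw [norm_neg, norm_pow, norm_one]
        nlinarith
    have hmain : N ^ 2 = (p : ℝ)⁻¹ * ‖z‖ ^ 2 := by
      rw [← h1z, ← hrhs, ← key, hani]
    -- pick w achieving the max
    obtain ⟨w, hwN⟩ : ∃ w : ℚ_[p], ‖w‖ = N := by
      rcases le_total ‖y‖ ‖m‖ with h | h
      · exact ⟨m, (max_eq_left h).symm⟩
      · exact ⟨y, (max_eq_right h).symm⟩
    have hw0 : w ≠ 0 := by
      intro h0; rw [h0, norm_zero] at hwN; linarith
    have hz0 : z ≠ 0 := by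
      intro h0; rw [h0, norm_zero] at hz; linarith
    rw [← hwN, Padic.norm_eq_zpow_neg_valuation hw0, Padic.norm_eq_zpow_neg_valuation hz0] at hmain
    have hmain2 : ((p:ℝ)) ^ ((-w.valuation) * 2) = ((p:ℝ)) ^ ((-z.valuation) * 2 + (-1)) := by
      rw [pow_two, pow_two] at hmain
      rw [_root_.zpow_add₀ (by positivity : ((p:ℝ)) ≠ 0), _root_.zpow_mul, _root_.zpow_mul, _root_.zpow_two, _root_.zpow_two,
        _root_.zpow_neg_one, hmain]
      ring
    have := zpow_right_injective₀ (by positivity : (0:ℝ) < p) (by linarith) hmain2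
    omega

-- entry extraction
lemma entry_eq (v : ℚ_[p]) (L : Matrix (Fin 3) (Fin 3) ℚ_[p])
    (h : Lᵀ * Matrix.diagonal ![1, -v, (p : ℚ_[p])] * L = Matrix.diagonal ![1, -v, (p : ℚ_[p])])
    (i j : Fin 3) :
    L 0 i * L 0 j - v * (L 1 i * L 1 j) + p * (L 2 i * L 2 j)
      = Matrix.diagonal ![1, -v, (p : ℚ_[p])] i j := by
  have := congrArg (fun m : Matrix (Fin 3) (Fin 3) ℚ_[p] => m i j) h
  simp only [Matrix.mul_apply, Fin.sum_univ_three, Matrix.transpose_apply,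
    Matrix.diagonal_apply, Matrix.cons_val_zero, Matrix.cons_val_one, Matrix.head_cons,
    Matrix.cons_val_two, Matrix.tail_cons] at this ⊢
  rw [← this]
  have h0 : ((0:Fin 3):ℕ) = 0 := rfl
  fin_cases i <;> fin_cases j <;> simp <;> ring

noncomputable def Ymat (p : ℕ) [Fact p.Prime] (a b : ℚ_[p]) : Matrix (Fin 3) (Fin 3) ℚ_[p] :=
  !![a, 0, -(p:ℚ_[p])*b; 0, 1, 0; b, 0, a]

noncomputable def Xmat (p : ℕ) [Fact p.Prime] (v c s : ℚ_[p]) : Matrix (Fin 3) (Fin 3) ℚ_[p] :=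
  !![1, 0, 0; 0, c, (p:ℚ_[p])/v*s; 0, s, c]

lemma Y_form (hv0 : v ≠ 0) (Y : Matrix (Fin 3) (Fin 3) ℚ_[p])
    (hmem : Yᵀ * Matrix.diagonal ![1, -v, (p : ℚ_[p])] * Y = Matrix.diagonal ![1, -v, (p : ℚ_[p])])
    (hdet : Y.det = 1)
    (h01 : Y 0 1 = 0) (h11 : Y 1 1 = 1) (h21 : Y 2 1 = 0) :
    Y = Ymat p (Y 0 0) (Y 2 0) ∧ (Y 0 0)^2 + p * (Y 2 0)^2 = 1 := by
  have e01 := entry_eq v Y hmem 0 1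
  have e12 := entry_eq v Y hmem 1 2
  have e00 := entry_eq v Y hmem 0 0
  have e02 := entry_eq v Y hmem 0 2
  rw [show (Matrix.diagonal ![1, -v, (p : ℚ_[p])] 0 1) = 0 by simp] at e01
  rw [show (Matrix.diagonal ![1, -v, (p : ℚ_[p])] 1 2) = 0 by simp [Matrix.diagonal_apply]] at e12
  rw [show (Matrix.diagonal ![1, -v, (p : ℚ_[p])] 0 0) = 1 by simp] at e00
  rw [show (Matrix.diagonal ![1, -v, (p : ℚ_[p])] 0 2) = 0 by simp [Matrix.diagonal_apply]] at e02
  simp only [h01, h11, h21] at e01 e12 e00 e02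
  have h10 : Y 1 0 = 0 := by
    have h : v * Y 1 0 = 0 := by linear_combination -e01
    exact (mul_eq_zero.mp h).resolve_left hv0
  have h12 : Y 1 2 = 0 := by
    have h : v * Y 1 2 = 0 := by linear_combination -e12
    exact (mul_eq_zero.mp h).resolve_left hv0
  simp only [h10] at e00 e02
  rw [Matrix.det_fin_three] at hdet
  simp only [h01, h11, h21, h10, h12] at hdet
  have hcond : (Y 0 0)^2 + p * (Y 2 0)^2 = 1 := by linear_combination e00
  have h02 : Y 0 2 = -(p:ℚ_[p]) * Y 2 0 := by
    linear_combination (Y 0 0)*e02 - (p:ℚ_[p])*(Y 2 0)*hdet - (Y 0 2)*hcond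
  have h22 : Y 2 2 = Y 0 0 := by
    linear_combination (Y 2 0)*e02 + (Y 0 0)*hdet - (Y 2 2)*hcond
  refine ⟨?_, hcond⟩
  ext i j
  fin_cases i <;> fin_cases j <;>
    simp [Ymat, h01, h11, h21, h10, h12, h02, h22, Matrix.vecHead, Matrix.vecTail]

lemma X_form (hv0 : v ≠ 0) (X : Matrix (Fin 3) (Fin 3) ℚ_[p])
    (hmem : Xᵀ * Matrix.diagonal ![1, -v, (p : ℚ_[p])] * X = Matrix.diagonal ![1, -v, (p : ℚ_[p])])
    (hdet : X.det = 1)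
    (h00 : X 0 0 = 1) (h10 : X 1 0 = 0) (h20 : X 2 0 = 0) :
    X = Xmat p v (X 1 1) (X 2 1) ∧ -v * (X 1 1)^2 + p * (X 2 1)^2 = -v := by
  have e01 := entry_eq v X hmem 0 1
  have e02 := entry_eq v X hmem 0 2
  have e11 := entry_eq v X hmem 1 1
  have e12 := entry_eq v X hmem 1 2
  rw [show (Matrix.diagonal ![1, -v, (p : ℚ_[p])] 0 1) = 0 by simp [Matrix.diagonal_apply]] at e01
  rw [show (Matrix.diagonal ![1, -v, (p : ℚ_[p])] 0 2) = 0 by simp [Matrix.diagonal_apply]] at e02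
  rw [show (Matrix.diagonal ![1, -v, (p : ℚ_[p])] 1 1) = -v by simp [Matrix.diagonal_apply]] at e11
  rw [show (Matrix.diagonal ![1, -v, (p : ℚ_[p])] 1 2) = 0 by simp [Matrix.diagonal_apply]] at e12
  simp only [h00, h10, h20] at e01 e02 e11 e12
  have h01 : X 0 1 = 0 := by linear_combination e01
  have h02 : X 0 2 = 0 := by linear_combination e02
  simp only [h01, h02] at e11 e12
  rw [Matrix.det_fin_three] at hdet
  simp only [h00, h10, h20, h01, h02] at hdet
  have hcond : -v * (X 1 1)^2 + p * (X 2 1)^2 = -v := by linear_combination e11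
  have h22 : X 2 2 = X 1 1 := by
    have h : v * X 2 2 = v * X 1 1 := by
      linear_combination -((X 2 1)*e12) + v*(X 1 1)*hdet + (X 2 2)*e11
    exact mul_left_cancel₀ hv0 h
  have h12 : X 1 2 = (p:ℚ_[p]) / v * X 2 1 := by
    have h : v * X 1 2 = p * X 2 1 := by
      linear_combination -((X 1 1)*e12) + (p:ℚ_[p])*(X 2 1)*hdet + (X 1 2)*e11
    field_simp
    linear_combination h
  refine ⟨?_, hcond⟩
  ext i j
  fin_cases i <;> fin_cases j <;>
    simp [Xmat, h00, h10, h20, h01, h02, h12, h22, Matrix.vecHead, Matrix.vecTail]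

lemma Xmat_mem (hv0 : v ≠ 0) (c s : ℚ_[p]) (hcond : -v * c^2 + p * s^2 = -v) :
    (Xmat p v c s)ᵀ * Matrix.diagonal ![1, -v, (p : ℚ_[p])] * Xmat p v c s
      = Matrix.diagonal ![1, -v, (p : ℚ_[p])] ∧ (Xmat p v c s).det = 1 := by
  constructor
  · ext i j
    fin_cases i <;> fin_cases j <;>
      simp [Matrix.mul_apply, Fin.sum_univ_three, Xmat, Matrix.diagonal_apply,
        Matrix.vecHead, Matrix.vecTail] <;>
      (try field_simp) <;>
      first
        | ring1
        | linear_combination hcond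
        | linear_combination -hcond
        | linear_combination (p:ℚ_[p])*hcond
        | linear_combination -(p:ℚ_[p])*hcond
        | linear_combination v*hcond
        | linear_combination -v*hcond
        | linear_combination hcond/v
        | linear_combination -hcond/v
  · rw [Matrix.det_fin_three]
    simp [Xmat, Matrix.vecHead, Matrix.vecTail]
    field_simp
    first
      | ring1
      | linear_combination hcond
      | linear_combination -hcond
      | linear_combination v*hcond
      | linear_combination -v*hcond

lemma Ymat_mem (a b : ℚ_[p]) (hcond : a^2 + p * b^2 = 1) :
    (Ymat p a b)ᵀ * Matrix.diagonal ![1, -v, (p : ℚ_[p])] * Ymat p a b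
      = Matrix.diagonal ![1, -v, (p : ℚ_[p])] ∧ (Ymat p a b).det = 1 := by
  constructor
  · ext i j
    fin_cases i <;> fin_cases j <;>
      simp [Matrix.mul_apply, Fin.sum_univ_three, Ymat, Matrix.diagonal_apply,
        Matrix.vecHead, Matrix.vecTail] <;>
      first
        | ring1
        | linear_combination hcond
        | linear_combination -hcond
        | linear_combination (p:ℚ_[p])*hcond
        | linear_combination -(p:ℚ_[p])*hcond
  · rw [Matrix.det_fin_three]
    simp [Ymat, Matrix.vecHead, Matrix.vecTail]
    linear_combination hcond

lemma inv_mem (D L : Matrix (Fin 3) (Fin 3) ℚ_[p]) (h1 : Lᵀ * D * L = D) (h2 : L.det = 1) :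
    (L⁻¹)ᵀ * D * L⁻¹ = D ∧ (L⁻¹).det = 1 := by
  have hu : IsUnit L.det := by rw [h2]; exact isUnit_one
  have hLL : L * L⁻¹ = 1 := Matrix.mul_nonsing_inv L hu
  constructor
  · calc (L⁻¹)ᵀ * D * L⁻¹ = (L⁻¹)ᵀ * (Lᵀ * D * L) * L⁻¹ := by rw [h1]
    _ = (L * L⁻¹)ᵀ * D * (L * L⁻¹) := by
        rw [Matrix.transpose_mul]
        simp only [Matrix.mul_assoc]
    _ = D := by rw [hLL]; simp
  · rw [Matrix.det_nonsing_inv, h2]; simp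

lemma col_entry {L : Matrix (Fin 3) (Fin 3) ℚ_[p]} {j : Fin 3}
    (h : L *ᵥ Pi.single j 1 = Pi.single j 1) (i : Fin 3) :
    L i j = (Pi.single j 1 : Fin 3 → ℚ_[p]) i := by
  have := congrFun h i
  simpa using this

lemma norm_one_of_close {u : ℚ_[p]} (h : ‖u - 1‖ < 1) : ‖u‖ = 1 := by
  have he : u = 1 + (u - 1) := by ring
  rw [he, Padic.add_eq_max_of_ne (by simpa using h.ne')]
  simp [le_of_lt h]

lemma mul_mem (D L N : Matrix (Fin 3) (Fin 3) ℚ_[p])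
    (hL1 : Lᵀ * D * L = D) (hL2 : L.det = 1)
    (hN1 : Nᵀ * D * N = D) (hN2 : N.det = 1) :
    (L * N)ᵀ * D * (L * N) = D ∧ (L * N).det = 1 := by
  constructor
  · have h : (L * N)ᵀ * D * (L * N) = Nᵀ * (Lᵀ * D * L) * N := by
      rw [Matrix.transpose_mul]; simp only [Matrix.mul_assoc]
    rw [h, hL1]; exact hN1
  · rw [Matrix.det_mul, hL2, hN2, mul_one]

noncomputable def Trip (p : ℕ) [Fact p.Prime] (v : ℚ_[p]) (M : Matrix (Fin 3) (Fin 3) ℚ_[p])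
    (a : ℚ_[p]) :
    Matrix (Fin 3) (Fin 3) ℚ_[p] × Matrix (Fin 3) (Fin 3) ℚ_[p] × Matrix (Fin 3) (Fin 3) ℚ_[p] :=
  (Xmat p v (M 2 2 / a) (v * M 1 2 / (p * a)), Ymat p a (-(M 0 2) / p),
    (Xmat p v (M 2 2 / a) (v * M 1 2 / (p * a)) * Ymat p a (-(M 0 2) / p))⁻¹ * M)

lemma construct (hv0 : v ≠ 0) (hp0 : ((p : ℚ_[p])) ≠ 0)
    (M : Matrix (Fin 3) (Fin 3) ℚ_[p])
    (hMform : Mᵀ * Matrix.diagonal ![1, -v, (p : ℚ_[p])] * M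
      = Matrix.diagonal ![1, -v, (p : ℚ_[p])])
    (hMdet : M.det = 1)
    (a : ℚ_[p]) (ha : a * a = 1 - (M 0 2) ^ 2 / p) (ha0 : a ≠ 0)
    (X Y Z : Matrix (Fin 3) (Fin 3) ℚ_[p])
    (hXdef : X = Xmat p v (M 2 2 / a) (v * M 1 2 / ((p : ℚ_[p]) * a)))
    (hYdef : Y = Ymat p a (-(M 0 2) / p))
    (hZdef : Z = (X * Y)⁻¹ * M) :
    (Xᵀ * Matrix.diagonal ![1, -v, (p : ℚ_[p])] * X = Matrix.diagonal ![1, -v, (p : ℚ_[p])]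
        ∧ X.det = 1)
      ∧ (Yᵀ * Matrix.diagonal ![1, -v, (p : ℚ_[p])] * Y = Matrix.diagonal ![1, -v, (p : ℚ_[p])]
        ∧ Y.det = 1)
      ∧ (Zᵀ * Matrix.diagonal ![1, -v, (p : ℚ_[p])] * Z = Matrix.diagonal ![1, -v, (p : ℚ_[p])]
        ∧ Z.det = 1)
      ∧ X *ᵥ Pi.single 0 1 = Pi.single 0 1
      ∧ Y *ᵥ Pi.single 1 1 = Pi.single 1 1
      ∧ Z *ᵥ Pi.single 2 1 = Pi.single 2 1
      ∧ M = X * Y * Z := by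
  have hcol : (M 0 2) ^ 2 - v * (M 1 2) ^ 2 + p * (M 2 2) ^ 2 = p := by
    have h := entry_eq v M hMform 2 2
    rw [show (Matrix.diagonal ![1, -v, (p : ℚ_[p])] 2 2) = p by
      simp [Matrix.diagonal_apply]] at h
    linear_combination h
  set c := M 2 2 / a with hc
  set s := v * M 1 2 / ((p : ℚ_[p]) * a) with hs
  have hc' : c * a = M 2 2 := div_mul_cancel₀ (M 2 2) ha0
  have hs' : (p : ℚ_[p]) * s * a = v * M 1 2 := by
    rw [hs]; field_simp
  have hpa : (p : ℚ_[p]) * (a * a) = p - (M 0 2) ^ 2 := by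
    rw [ha]; field_simp
  have hXcond : -v * c ^ 2 + p * s ^ 2 = -v := by
    have hmul : (-v * c ^ 2 + p * s ^ 2 + v) * ((p : ℚ_[p]) * (a * a)) = 0 := by
      linear_combination (-v * (p : ℚ_[p]) * (c * a + M 2 2)) * hc'
        + ((p : ℚ_[p]) * s * a + v * M 1 2) * hs' + v * hpa - v * hcol
    have h2 : (p : ℚ_[p]) * (a * a) ≠ 0 := by
      apply mul_ne_zero hp0 (mul_ne_zero ha0 ha0)
    have h3 := (mul_eq_zero.mp hmul).resolve_right h2
    linear_combination h3
  have hb' : (p : ℚ_[p]) * (-(M 0 2) / p) = -(M 0 2) := by field_simp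
  have hYcond : a ^ 2 + p * (-(M 0 2) / p) ^ 2 = 1 := by
    have hmul : (a ^ 2 + p * (-(M 0 2) / p) ^ 2 - 1) * (p : ℚ_[p]) = 0 := by
      linear_combination hpa + ((p : ℚ_[p]) * (-(M 0 2) / p) - M 0 2) * hb'
    have h3 := (mul_eq_zero.mp hmul).resolve_right hp0
    linear_combination h3
  have hXmem := Xmat_mem hv0 c s hXcond
  have hYmem := Ymat_mem (v := v) a (-(M 0 2) / p) hYcond
  rw [← hXdef] at hXmem
  rw [← hYdef] at hYmem
  have hXYmem := mul_mem _ X Y hXmem.1 hXmem.2 hYmem.1 hYmem.2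
  have hXYinv := inv_mem _ (X * Y) hXYmem.1 hXYmem.2
  have hZmem := mul_mem _ ((X * Y)⁻¹) M hXYinv.1 hXYinv.2 hMform hMdet
  rw [← hZdef] at hZmem
  have hXYunit : IsUnit (X * Y).det := by rw [hXYmem.2]; exact isUnit_one
  have hXfix : X *ᵥ Pi.single 0 1 = Pi.single 0 1 := by
    rw [hXdef]
    funext i
    fin_cases i <;>
      simp [Xmat, Matrix.mulVec_single, Matrix.vecHead, Matrix.vecTail, Pi.single_apply]
  have hYfix : Y *ᵥ Pi.single 1 1 = Pi.single 1 1 := by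
    rw [hYdef]
    funext i
    fin_cases i <;>
      simp [Ymat, Matrix.mulVec_single, Matrix.vecHead, Matrix.vecTail, Pi.single_apply]
  have hMcol : M *ᵥ Pi.single 2 1 = (X * Y) *ᵥ Pi.single 2 1 := by
    funext i
    rw [hXdef, hYdef]
    have e0 : (1:ℚ_[p]) * (-(p:ℚ_[p]) * (-(M 0 2) / p)) = M 0 2 := by field_simp
    have e1 : (p:ℚ_[p]) / v * s * a = M 1 2 := by rw [hs]; field_simp
    have e2 : c * a = M 2 2 := hc'
    fin_cases i <;>
      simp [Xmat, Ymat, Matrix.mulVec_single, Matrix.mul_apply, Fin.sum_univ_three,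
        Matrix.vecHead, Matrix.vecTail]
    · field_simp
    · rw [hs]; field_simp
    · rw [hc]; field_simp
  have hZfix : Z *ᵥ Pi.single 2 1 = Pi.single 2 1 := by
    rw [hZdef, ← Matrix.mulVec_mulVec, hMcol, Matrix.mulVec_mulVec,
      Matrix.nonsing_inv_mul _ hXYunit, Matrix.one_mulVec]
  refine ⟨hXmem, hYmem, hZmem, hXfix, hYfix, hZfix, ?_⟩
  rw [hZdef, ← Matrix.mul_assoc, Matrix.mul_nonsing_inv _ hXYunit, Matrix.one_mul]

lemma unique_decomp (hv0 : v ≠ 0) (hp0 : ((p : ℚ_[p])) ≠ 0)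
    (M : Matrix (Fin 3) (Fin 3) ℚ_[p])
    (hune : 1 - (M 0 2) ^ 2 / (p : ℚ_[p]) ≠ 0)
    (X Y Z : Matrix (Fin 3) (Fin 3) ℚ_[p])
    (hXform : Xᵀ * Matrix.diagonal ![1, -v, (p : ℚ_[p])] * X = Matrix.diagonal ![1, -v, (p : ℚ_[p])])
    (hXdet : X.det = 1)
    (hYform : Yᵀ * Matrix.diagonal ![1, -v, (p : ℚ_[p])] * Y = Matrix.diagonal ![1, -v, (p : ℚ_[p])])
    (hYdet : Y.det = 1)
    (hXe : X *ᵥ Pi.single 0 1 = Pi.single 0 1)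
    (hYe : Y *ᵥ Pi.single 1 1 = Pi.single 1 1)
    (hZe : Z *ᵥ Pi.single 2 1 = Pi.single 2 1)
    (hMeq : M = X * Y * Z) :
    ∃ a : ℚ_[p], a ≠ 0 ∧ a * a = 1 - (M 0 2) ^ 2 / p
      ∧ X = Xmat p v (M 2 2 / a) (v * M 1 2 / ((p : ℚ_[p]) * a))
      ∧ Y = Ymat p a (-(M 0 2) / p)
      ∧ Z = (X * Y)⁻¹ * M := by
  have hX00 : X 0 0 = 1 := by have := col_entry hXe 0; simpa using this
  have hX10 : X 1 0 = 0 := by have := col_entry hXe 1; simpa using this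
  have hX20 : X 2 0 = 0 := by have := col_entry hXe 2; simpa using this
  have hY01 : Y 0 1 = 0 := by have := col_entry hYe 0; simpa using this
  have hY11 : Y 1 1 = 1 := by have := col_entry hYe 1; simpa using this
  have hY21 : Y 2 1 = 0 := by have := col_entry hYe 2; simpa using this
  obtain ⟨hXf, hXcond⟩ := X_form hv0 X hXform hXdet hX00 hX10 hX20
  obtain ⟨hYf, hYcond⟩ := Y_form hv0 Y hYform hYdet hY01 hY11 hY21
  have hXYunit : IsUnit (X * Y).det := by
    rw [Matrix.det_mul, hXdet, hYdet, mul_one]; exact isUnit_one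
  have hMcol : M *ᵥ Pi.single 2 1 = (X * Y) *ᵥ Pi.single 2 1 := by
    rw [hMeq, ← Matrix.mulVec_mulVec, hZe]
  have hm : M 0 2 = -(p : ℚ_[p]) * Y 2 0 := by
    have h := congrFun hMcol 0
    rw [hXf, hYf] at h
    simp [Xmat, Ymat, Matrix.mulVec_single, Matrix.mul_apply, Fin.sum_univ_three,
      Matrix.vecHead, Matrix.vecTail] at h
    linear_combination h
  have hw1 : M 1 2 = (p : ℚ_[p]) / v * X 2 1 * Y 0 0 := by
    have h := congrFun hMcol 1
    rw [hXf, hYf] at h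
    simp [Xmat, Ymat, Matrix.mulVec_single, Matrix.mul_apply, Fin.sum_univ_three,
      Matrix.vecHead, Matrix.vecTail] at h
    linear_combination h
  have hw2 : M 2 2 = X 1 1 * Y 0 0 := by
    have h := congrFun hMcol 2
    rw [hXf, hYf] at h
    simp [Xmat, Ymat, Matrix.mulVec_single, Matrix.mul_apply, Fin.sum_univ_three,
      Matrix.vecHead, Matrix.vecTail] at h
    linear_combination h
  have hpa : (p : ℚ_[p]) * (Y 0 0 * Y 0 0) = p - (M 0 2) ^ 2 := by
    linear_combination (p : ℚ_[p]) * hYcond + (M 0 2 - (p : ℚ_[p]) * Y 2 0) * hm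
  have haa : Y 0 0 * Y 0 0 = 1 - (M 0 2) ^ 2 / p := by
    field_simp
    linear_combination hpa
  have ha0 : Y 0 0 ≠ 0 := by
    intro h0
    rw [h0] at haa
    exact hune (by rw [← haa]; ring)
  have hcs : X 1 1 = M 2 2 / Y 0 0 := by rw [hw2]; field_simp
  have hss : X 2 1 = v * M 1 2 / ((p : ℚ_[p]) * Y 0 0) := by
    rw [hw1]; field_simp
  have hb : Y 2 0 = -(M 0 2) / p := by rw [hm]; field_simp
  have hZ : Z = (X * Y)⁻¹ * M := by
    rw [hMeq, ← Matrix.mul_assoc, Matrix.nonsing_inv_mul _ hXYunit, Matrix.one_mul]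
  refine ⟨Y 0 0, ha0, haa, ?_, ?_, hZ⟩
  · rw [hcs, hss] at hXf; exact hXf
  · rw [hb] at hYf; exact hYf

/-- For odd `p`, every `M ∈ SO(3)_p` has exactly two Cardano
decompositions `M = X·Y·Z` with `X, Y, Z ∈ SO(3)_p` fixing `e₁`, `e₂`, `e₃`
respectively. -/
theorem cardano_decomposition_exactly_two
    (p : ℕ) [Fact p.Prime] (hp : p ≠ 2)
    (v : ℚ_[p]) (hv : ‖v‖ = 1) (hvsq : ¬ IsSquare v)
    (A : Matrix (Fin 3) (Fin 3) ℚ_[p])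
    (hA : A = Matrix.diagonal ![1, -v, (p : ℚ_[p])])
    (SO3 : Set (Matrix (Fin 3) (Fin 3) ℚ_[p]))
    (hSO3 : SO3 = {L | Lᵀ * A * L = A ∧ L.det = 1})
    (e : Fin 3 → (Fin 3 → ℚ_[p])) (he : ∀ i, e i = Pi.single i 1)
    (M : Matrix (Fin 3) (Fin 3) ℚ_[p]) (hM : M ∈ SO3) :
    {t : Matrix (Fin 3) (Fin 3) ℚ_[p] × Matrix (Fin 3) (Fin 3) ℚ_[p] ×
        Matrix (Fin 3) (Fin 3) ℚ_[p] |
      t.1 ∈ SO3 ∧ t.2.1 ∈ SO3 ∧ t.2.2 ∈ SO3 ∧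
      t.1.mulVec (e 0) = e 0 ∧ t.2.1.mulVec (e 1) = e 1 ∧
      t.2.2.mulVec (e 2) = e 2 ∧ M = t.1 * t.2.1 * t.2.2}.encard = 2 := by
  subst hA
  subst hSO3
  have hv0 : v ≠ 0 := fun h => by simp [h] at hv
  have hp0 : ((p : ℚ_[p])) ≠ 0 := Nat.cast_ne_zero.mpr (Fact.out : p.Prime).ne_zero
  have hp1 : (1 : ℝ) < p := by exact_mod_cast (Fact.out : p.Prime).one_lt
  obtain ⟨hMform, hMdet⟩ := hM
  have hcol : (M 0 2) ^ 2 - v * (M 1 2) ^ 2 + p * (M 2 2) ^ 2 = p := by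
    have h := entry_eq v M hMform 2 2
    rw [show (Matrix.diagonal ![1, -v, (p : ℚ_[p])] 2 2) = p by
      simp [Matrix.diagonal_apply]] at h
    linear_combination h
  have hmnorm := m_bound hp hv hvsq _ _ _ hcol
  have hclose : ‖(1 - (M 0 2) ^ 2 / (p : ℚ_[p])) - 1‖ < 1 := by
    have heq : (1 - (M 0 2) ^ 2 / (p : ℚ_[p])) - 1 = -((M 0 2) ^ 2 / p) := by ring
    rw [heq, norm_neg, norm_div, norm_pow, Padic.norm_p]
    have h1 : ‖M 0 2‖ ≤ (p : ℝ)⁻¹ := by rw [← _root_.zpow_neg_one]; exact hmnorm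
    have hppos : (0 : ℝ) < (p : ℝ)⁻¹ := by positivity
    have h2 : ‖M 0 2‖ ^ 2 / (p : ℝ)⁻¹ ≤ (p : ℝ)⁻¹ := by
      rw [div_le_iff₀ hppos, sq]
      exact mul_le_mul h1 h1 (norm_nonneg _) (le_of_lt hppos)
    have hpinv : (p : ℝ)⁻¹ < 1 := by
      have h3 := mul_inv_cancel₀ (show (p : ℝ) ≠ 0 by positivity)
      nlinarith
    exact lt_of_le_of_lt h2 hpinv
  obtain ⟨r, hr⟩ := sqrt_close_one hp _ hclose
  have hune : 1 - (M 0 2) ^ 2 / (p : ℚ_[p]) ≠ 0 := fun h0 => by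
    have h1 := norm_one_of_close hclose
    rw [h0] at h1
    simp at h1
  have hr0 : r ≠ 0 := fun h0 => hune (by rw [← hr, h0]; ring)
  have hrr : -r * -r = 1 - (M 0 2) ^ 2 / (p : ℚ_[p]) := by rw [← hr]; ring
  have hrne : r ≠ -r := by
    intro h
    apply hr0
    have h2 : (2 : ℚ_[p]) * r = 0 := by linear_combination h
    rcases mul_eq_zero.mp h2 with h3 | h3
    · exact absurd h3 two_ne_zero
    · exact h3
  simp only [he]
  have hTne : Trip p v M r ≠ Trip p v M (-r) := by
    intro hEq
    have h1 : (Trip p v M r).2.1 0 0 = (Trip p v M (-r)).2.1 0 0 := by rw [hEq]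
    simp [Trip, Ymat] at h1
    exact hrne h1
  have hpair := Set.encard_pair hTne
  convert hpair using 2
  ext t
  simp only [Set.mem_setOf_eq, Set.mem_insert_iff, Set.mem_singleton_iff]
  constructor
  · rintro ⟨hX, hY, hZ, hXe, hYe, hZe, hMeq⟩
    obtain ⟨a, ha0, haa, hXf, hYf, hZf⟩ :=
      unique_decomp hv0 hp0 M hune t.1 t.2.1 t.2.2 hX.1 hX.2 hY.1 hY.2 hXe hYe hZe hMeq
    have hcases : a = r ∨ a = -r := by
      have h4 : (a - r) * (a + r) = 0 := by linear_combination haa - hr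
      rcases mul_eq_zero.mp h4 with h | h
      · left; exact sub_eq_zero.mp h
      · right; exact eq_neg_of_add_eq_zero_left h
    have ht : t = (t.1, t.2.1, t.2.2) := rfl
    rcases hcases with rfl | rfl
    · left
      rw [hXf, hYf] at hZf
      have : t = Trip p v M a := by
        rw [ht]
        exact Prod.ext hXf (Prod.ext hYf hZf)
      exact this
    · right
      rw [hXf, hYf] at hZf
      have : t = Trip p v M (-r) := by
        rw [ht]
        exact Prod.ext hXf (Prod.ext hYf hZf)
      exact this
  · rintro (rfl | rfl)
    · obtain ⟨hXm, hYm, hZm, hXfix, hYfix, hZfix, hMeq⟩ :=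
        construct hv0 hp0 M hMform hMdet r hr hr0 _ _ _ rfl rfl rfl
      exact ⟨hXm, hYm, hZm, hXfix, hYfix, hZfix, hMeq⟩
    · obtain ⟨hXm, hYm, hZm, hXfix, hYfix, hZfix, hMeq⟩ :=
        construct hv0 hp0 M hMform hMdet (-r) hrr (neg_ne_zero.mpr hr0) _ _ _ rfl rfl rfl
      exact ⟨hXm, hYm, hZm, hXfix, hYfix, hZfix, hMeq⟩
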